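/- With A, J, F, S as in the block factorization (J A + μ = J (1 G; 0 1) diag(S+μ, A₂₂−μ) (1 0; F 1)), for every x₊ ∈ D⁺ one has (S x₊, x₊) = ( J A (x₊, −F x₊), (x₊, −F x₊) ) + μ (F x₊, F x₊). Consequently, if A is dissipative in the Krein space (H, [·,·]) (i.e. Re(JAx,x) ≤ 0 on D(A)) and Re μ < 0, then S = S(μ) with domain D⁺ is dissipative in the Hilbert space H⁺. -/

import Mathlib

local notation "⟪" x ", " y "⟫" => @inner ℂ _ _ x y

variable {Hp Hm : Type*}
  [NormedAddCommGroup Hp] [InnerProductSpace ℂ Hp] [CompleteSpace Hp]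
  [NormedAddCommGroup Hm] [InnerProductSpace ℂ Hm] [CompleteSpace Hm]

/-- With `F = (A₂₂−μ)⁻¹A₂₁` (via the resolvent `R`) and `S = A₁₁ − A₁₂F`, for every
`x₊ ∈ D⁺` one has `(Sx₊, x₊) = (JA(x₊, −Fx₊), (x₊, −Fx₊)) + μ(Fx₊, Fx₊)` (written
with the inner product `(u,v) = ⟪v,u⟫`).  Consequently, if `A` is dissipative in
the Krein space `(H, [·,·])` (`Re(JAv, v) ≤ 0` on `D⁺ ⊕ D⁻`) and `Re μ < 0`, then
`S` with domain `D⁺` is dissipative in `H⁺`. -/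
theorem stmt11 (Dp : Submodule ℂ Hp) (Dm : Submodule ℂ Hm)
    (A11 : Dp →ₗ[ℂ] Hp) (A12 : Dm →ₗ[ℂ] Hp)
    (A21 : Dp →ₗ[ℂ] Hm) (A22 : Dm →ₗ[ℂ] Hm)
    (μ : ℂ) (R : Hm →L[ℂ] Hm)
    (hRmem : ∀ y : Hm, R y ∈ Dm)
    (hRright : ∀ y : Hm, A22 ⟨R y, hRmem y⟩ - μ • R y = y)
    (hRleft : ∀ x : Dm, R (A22 x - μ • (x : Hm)) = (x : Hm)) :
    -- the identity (2.6):
    (∀ x : Dp,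
      (⟪(x : Hp), A11 x - A12 ⟨R (A21 x), hRmem _⟩⟫ : ℂ) =
        ((⟪(x : Hp), A11 x - A12 ⟨R (A21 x), hRmem _⟩⟫ : ℂ)
          + (⟪R (A21 x), A21 x - A22 ⟨R (A21 x), hRmem _⟩⟫ : ℂ))
        + μ * (⟪R (A21 x), R (A21 x)⟫ : ℂ)) ∧
    -- dissipativity of `S` when `A` is `J`-dissipative and `Re μ < 0`:
    ((∀ (x : Dp) (y : Dm),
        ((⟪(x : Hp), A11 x + A12 y⟫ : ℂ) - (⟪(y : Hm), A21 x + A22 y⟫ : ℂ)).re ≤ 0) →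
      μ.re < 0 →
      ∀ x : Dp, ((⟪(x : Hp), A11 x - A12 ⟨R (A21 x), hRmem _⟩⟫ : ℂ)).re ≤ 0) := by
  have key : ∀ x : Dp, A21 x - A22 ⟨R (A21 x), hRmem _⟩ = -(μ • R (A21 x)) := by
    intro x
    have h := hRright (A21 x)
    rw [sub_eq_iff_eq_add] at h
    rw [h]; abel
  constructor
  · intro x
    rw [key x, inner_neg_right, inner_smul_right]
    ring
  · intro hdis hμ x
    have h := hdis x (-⟨R (A21 x), hRmem _⟩)
    have e1 : A12 (-⟨R (A21 x), hRmem _⟩) = -A12 ⟨R (A21 x), hRmem _⟩ := map_neg _ _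
    have e2 : A22 (-⟨R (A21 x), hRmem _⟩) = -A22 ⟨R (A21 x), hRmem _⟩ := map_neg _ _
    rw [e1, e2] at h
    have hco : ((-⟨R (A21 x), hRmem _⟩ : Dm) : Hm) = -(R (A21 x)) := rfl
    rw [hco] at h
    have heq : (⟪(x : Hp), A11 x + -A12 ⟨R (A21 x), hRmem _⟩⟫ : ℂ)
        - (⟪-(R (A21 x)), A21 x + -A22 ⟨R (A21 x), hRmem _⟩⟫ : ℂ)
        = (⟪(x : Hp), A11 x - A12 ⟨R (A21 x), hRmem _⟩⟫ : ℂ)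
          + (⟪R (A21 x), A21 x - A22 ⟨R (A21 x), hRmem _⟩⟫ : ℂ) := by
      rw [inner_neg_left, sub_neg_eq_add]
      simp [sub_eq_add_neg, inner_add_right, inner_neg_right]
    rw [heq, key x, inner_neg_right, inner_smul_right] at h
    have hnn : (⟪R (A21 x), R (A21 x)⟫ : ℂ).re = ‖R (A21 x)‖ ^ 2 := by
      rw [inner_self_eq_norm_sq_to_K]; simp [pow_two]
    have him : (⟪R (A21 x), R (A21 x)⟫ : ℂ).im = 0 := by
      rw [inner_self_eq_norm_sq_to_K]; simp [← Complex.ofReal_pow]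
    have hmul : (μ * (⟪R (A21 x), R (A21 x)⟫ : ℂ)).re ≤ 0 := by
      rw [Complex.mul_re, hnn, him]
      nlinarith [sq_nonneg ‖R (A21 x)‖, hμ.le]
    simp only [Complex.add_re, Complex.neg_re] at h
    linarith
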